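/- Let G be a graph with a proper χ(G)-coloring, C₁ a color class, 𝒢 ≤ Aut(G) the stabilizer of C₁ (setwise), and F(C₁) the maximum number of vertices of C₁ fixed pointwise by any nontrivial element of 𝒢. If F(C₁) < |C₁| - 2·log_t|𝒢| for an integer t ≥ 2, then χ_D(G) ≤ χ(G) + t - 1. -/

import Mathlib

/-- A coloring is proper and distinguishing if it is proper and no nontrivial
automorphism preserves every color class. -/
def IsProperDistinguishing {V : Type*} (G : SimpleGraph V) {β : Type*} (c : V → β) : Prop :=
  (∀ ⦃u v : V⦄, G.Adj u v → c u ≠ c v) ∧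
    ∀ e : G ≃g G, (∀ v, c (e v) = c v) → ∀ v, e v = v

/-- The distinguishing chromatic number. -/
noncomputable def distChromaticNumber {V : Type*} (G : SimpleGraph V) : ℕ :=
  sInf {r : ℕ | ∃ c : V → Fin r, IsProperDistinguishing G c}

open Equiv Finset
open scoped Classical

/-- Setoid of the same-cycle relation of a permutation. -/
def cycSetoid {α : Type*} (σ : Equiv.Perm α) : Setoid α :=
  ⟨σ.SameCycle, ⟨fun x => Equiv.Perm.SameCycle.refl σ x, fun h => h.symm, fun h h' => h.trans h'⟩⟩

lemma fix_zpow {α : Type*} {β : Type*} (σ : Equiv.Perm α) (f : α → β)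
    (hf : ∀ x, f (σ x) = f x) : ∀ (m : ℤ) (x : α), f ((σ ^ m) x) = f x := by
  have hinv : ∀ x, f (σ⁻¹ x) = f x := by
    intro x
    conv_rhs => rw [← Equiv.apply_symm_apply σ x]
    rw [hf]
    rfl
  intro m
  induction m using Int.induction_on with
  | zero => simp
  | succ n ih => intro x; rw [zpow_add_one, Equiv.Perm.mul_apply, ih (σ x), hf]
  | pred n ih => intro x; rw [zpow_sub_one, Equiv.Perm.mul_apply, ih (σ⁻¹ x), hinv]

lemma fix_sameCycle {α : Type*} {β : Type*} (σ : Equiv.Perm α) (f : α → β)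
    (hf : ∀ x, f (σ x) = f x) {x y : α} (h : σ.SameCycle x y) : f x = f y := by
  obtain ⟨m, hm⟩ := h
  rw [← hm, fix_zpow σ f hf]

/-- The number of colorings of α fixed by σ is at most t ^ (number of cycles). -/
lemma countFixed {α : Type*} [Fintype α] (σ : Equiv.Perm α) (t : ℕ) :
    (Finset.univ.filter (fun f : α → Fin t => ∀ x, f (σ x) = f x)).card
      ≤ t ^ Fintype.card (Quotient (cycSetoid σ)) := by
  letI : Setoid α := cycSetoid σ
  have key := Finset.card_le_card_of_injOn
    (fun f (q : Quotient (cycSetoid σ)) => f (Quotient.out q))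
    (s := Finset.univ.filter (fun f : α → Fin t => ∀ x, f (σ x) = f x))
    (t := Finset.univ) (fun a _ => Finset.mem_univ _) ?_
  · rw [Finset.card_univ, Fintype.card_fun, Fintype.card_fin] at key
    exact key
  · intro f hf g hg hfg
    simp only [Finset.mem_coe, Finset.mem_filter] at hf hg
    funext x
    have hrel : σ.SameCycle x (Quotient.out (⟦x⟧ : Quotient (cycSetoid σ))) :=
      Setoid.symm (Quotient.mk_out x)
    have h1 : f x = f (Quotient.out (⟦x⟧ : Quotient (cycSetoid σ))) :=
      fix_sameCycle σ f hf.2 hrel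
    have h2 : g x = g (Quotient.out (⟦x⟧ : Quotient (cycSetoid σ))) :=
      fix_sameCycle σ g hg.2 hrel
    rw [h1, h2]
    exact congrFun hfg _

/-- Twice the number of cycles is at most card α plus the number of fixed points. -/
lemma cycleBound {α : Type*} [Fintype α] (σ : Equiv.Perm α) :
    2 * Fintype.card (Quotient (cycSetoid σ))
      ≤ Fintype.card α + (Finset.univ.filter (fun x => σ x = x)).card := by
  letI : Setoid α := cycSetoid σ
  set Q : Finset (Quotient (cycSetoid σ)) := Finset.univ
  set Qf : Finset (Quotient (cycSetoid σ)) :=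
    (Finset.univ.filter (fun x => σ x = x)).image (fun x => (⟦x⟧ : Quotient (cycSetoid σ))) with hQf
  have hcardsum : Fintype.card α = ∑ q ∈ Q, (Finset.univ.filter (fun a => (⟦a⟧ : Quotient (cycSetoid σ)) = q)).card := by
    rw [← Finset.card_univ]
    exact Finset.card_eq_sum_card_fiberwise (fun x _ => Finset.mem_univ _)
  have hQfsub : Qf ⊆ Q := fun q _ => Finset.mem_univ q
  have hone : ∀ q ∈ Qf, (2:ℕ) ≤ (Finset.univ.filter (fun a => (⟦a⟧ : Quotient (cycSetoid σ)) = q)).card + 1 := by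
    intro q _
    have : (Finset.univ.filter (fun a => (⟦a⟧ : Quotient (cycSetoid σ)) = q)).Nonempty :=
      ⟨Quotient.out q, by simp [Quotient.out_eq]⟩
    have := Finset.card_pos.mpr this
    omega
  have htwo : ∀ q ∈ Q \ Qf, (2:ℕ) ≤ (Finset.univ.filter (fun a => (⟦a⟧ : Quotient (cycSetoid σ)) = q)).card := by
    intro q hq
    rw [Finset.mem_sdiff] at hq
    set x := Quotient.out q with hx
    have hmk : (⟦x⟧ : Quotient (cycSetoid σ)) = q := Quotient.out_eq q
    have hmove : σ x ≠ x := by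
      intro hfix
      exact hq.2 (Finset.mem_image.mpr ⟨x, Finset.mem_filter.mpr ⟨Finset.mem_univ _, hfix⟩, hmk⟩)
    have hmk2 : (⟦σ x⟧ : Quotient (cycSetoid σ)) = q := by
      rw [← hmk]
      exact Quotient.sound (Equiv.Perm.SameCycle.symm ⟨1, by simp⟩)
    apply Finset.one_lt_card.mpr
    exact ⟨x, by simp [hmk], σ x, by simp [hmk2], hmove.symm⟩
  have hsum : 2 * Q.card ≤ (∑ q ∈ Q, (Finset.univ.filter (fun a => (⟦a⟧ : Quotient (cycSetoid σ)) = q)).card) + Qf.card := by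
    have e1 : 2 * Q.card = ∑ q ∈ Qf, 2 + ∑ q ∈ Q \ Qf, 2 := by
      rw [Finset.sum_const, Finset.sum_const, smul_eq_mul, smul_eq_mul,
        ← Nat.add_mul, Finset.card_sdiff_of_subset hQfsub]
      have := Finset.card_le_card hQfsub
      omega
    have e2 : ∑ q ∈ Qf, 2 ≤ ∑ q ∈ Qf, ((Finset.univ.filter (fun a => (⟦a⟧ : Quotient (cycSetoid σ)) = q)).card + 1) :=
      Finset.sum_le_sum hone
    have e3 : ∑ q ∈ Q \ Qf, 2 ≤ ∑ q ∈ Q \ Qf, (Finset.univ.filter (fun a => (⟦a⟧ : Quotient (cycSetoid σ)) = q)).card :=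
      Finset.sum_le_sum htwo
    have e4 : ∑ q ∈ Qf, ((Finset.univ.filter (fun a => (⟦a⟧ : Quotient (cycSetoid σ)) = q)).card + 1)
        = (∑ q ∈ Qf, (Finset.univ.filter (fun a => (⟦a⟧ : Quotient (cycSetoid σ)) = q)).card) + Qf.card := by
      rw [Finset.sum_add_distrib, Finset.sum_const, smul_eq_mul, mul_one]
    have e5 : (∑ q ∈ Qf, (Finset.univ.filter (fun a => (⟦a⟧ : Quotient (cycSetoid σ)) = q)).card)
        + (∑ q ∈ Q \ Qf, (Finset.univ.filter (fun a => (⟦a⟧ : Quotient (cycSetoid σ)) = q)).card)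
        = ∑ q ∈ Q, (Finset.univ.filter (fun a => (⟦a⟧ : Quotient (cycSetoid σ)) = q)).card := by
      rw [← Finset.sum_sdiff hQfsub]
      omega
    omega
  have hQfle : Qf.card ≤ (Finset.univ.filter (fun x => σ x = x)).card := Finset.card_image_le
  have hQcard : Q.card = Fintype.card (Quotient (cycSetoid σ)) := Finset.card_univ
  omega

lemma log_ineq_consequence {g t n F : ℕ} (hg : 1 ≤ g) (ht : 2 ≤ t)
    (h : (F : ℝ) < (n : ℝ) - 2 * (Real.log g / Real.log t)) :
    F < n ∧ g ^ 2 < t ^ (n - F) := by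
  have hlogt : 0 < Real.log t := Real.log_pos (by exact_mod_cast ht)
  have hlogg : 0 ≤ Real.log g := Real.log_nonneg (by exact_mod_cast hg)
  have hq : 0 ≤ 2 * (Real.log g / Real.log t) := by positivity
  have hFn : F < n := by
    have : (F : ℝ) < (n : ℝ) := by linarith
    exact_mod_cast this
  refine ⟨hFn, ?_⟩
  have h1 : 2 * Real.log g < ((n : ℝ) - (F : ℝ)) * Real.log t := by
    rw [mul_div_assoc'] at h
    have := (div_lt_iff₀ hlogt).mp (by linarith : 2 * Real.log g / Real.log t < (n : ℝ) - (F : ℝ))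
    linarith
  have hcast : ((n - F : ℕ) : ℝ) = (n : ℝ) - (F : ℝ) := by
    exact_mod_cast Nat.cast_sub hFn.le
  have h2 : Real.log ((g : ℝ) ^ 2) < Real.log ((t : ℝ) ^ (n - F)) := by
    rw [Real.log_pow, Real.log_pow, hcast]
    push_cast
    linarith
  have hgpos : (0 : ℝ) < (g : ℝ) ^ 2 := by positivity
  have htpos : (0 : ℝ) < (t : ℝ) ^ (n - F) := by positivity
  have h3 : (g : ℝ) ^ 2 < (t : ℝ) ^ (n - F) := (Real.log_lt_log_iff hgpos htpos).mp h2
  exact_mod_cast h3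

lemma exists_good_coloring {α : Type*} [Fintype α] (t F g : ℕ) (ht : 2 ≤ t)
    (S : Set (Equiv.Perm α)) (hS : S.ncard ≤ g)
    (hfix : ∀ σ ∈ S, Nat.card {x : α // σ x = x} ≤ F)
    (hFn : F < Fintype.card α) (hlt : g ^ 2 < t ^ (Fintype.card α - F)) :
    ∃ f : α → Fin t, ∀ σ ∈ S, ¬ (∀ x, f (σ x) = f x) := by
  set n := Fintype.card α with hn
  have ht1 : 1 ≤ t := le_trans (by norm_num) ht
  have hSfin : S.Finite := Set.toFinite _
  set T : Finset (Equiv.Perm α) := hSfin.toFinset with hT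
  have hTcard : T.card ≤ g := by
    rw [hT, ← Set.ncard_eq_toFinset_card S hSfin]
    exact hS
  set bad : Finset (α → Fin t) :=
    Finset.univ.filter (fun f => ∃ σ ∈ S, ∀ x, f (σ x) = f x) with hbad
  set M : ℕ := Nat.sqrt (t ^ (n + F)) with hM
  have hterm : ∀ σ ∈ T, (Finset.univ.filter (fun f : α → Fin t => ∀ x, f (σ x) = f x)).card ≤ M := by
    intro σ hσ
    have hσS : σ ∈ S := (Set.Finite.mem_toFinset hSfin).mp hσ
    have h1 := countFixed σ t
    have h2 := cycleBound σ
    have h3 : (Finset.univ.filter (fun x => σ x = x)).card ≤ F := by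
      have := hfix σ hσS
      rwa [Nat.card_eq_fintype_card, Fintype.card_subtype] at this
    have h4 : ∃ q : ℕ, (Finset.univ.filter (fun f : α → Fin t => ∀ x, f (σ x) = f x)).card ≤ t ^ q ∧ 2 * q ≤ n + F :=
      ⟨_, h1, by linarith⟩
    obtain ⟨q, hq1, hq2⟩ := h4
    apply le_trans hq1
    rw [hM, Nat.le_sqrt]
    calc t ^ q * t ^ q = t ^ (2 * q) := by rw [← pow_add]; ring_nf
    _ ≤ t ^ (n + F) := Nat.pow_le_pow_right ht1 hq2
  have hbadsub : bad ⊆ T.biUnion (fun σ => Finset.univ.filter (fun f : α → Fin t => ∀ x, f (σ x) = f x)) := by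
    intro f hf
    rw [hbad, Finset.mem_filter] at hf
    obtain ⟨-, σ, hσ, hfix'⟩ := hf
    exact Finset.mem_biUnion.mpr ⟨σ, (Set.Finite.mem_toFinset hSfin).mpr hσ,
      Finset.mem_filter.mpr ⟨Finset.mem_univ _, hfix'⟩⟩
  have hbadcard : bad.card ≤ g * M := by
    calc bad.card ≤ _ := Finset.card_le_card hbadsub
    _ ≤ ∑ σ ∈ T, (Finset.univ.filter (fun f : α → Fin t => ∀ x, f (σ x) = f x)).card :=
      Finset.card_biUnion_le
    _ ≤ T.card * M := Finset.sum_le_card_nsmul _ _ _ hterm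
    _ ≤ g * M := Nat.mul_le_mul_right _ hTcard
  have hfinal : g * M < t ^ n := by
    have hsq : (g * M) * (g * M) < t ^ n * t ^ n := by
      have hMM : M * M ≤ t ^ (n + F) := Nat.sqrt_le _
      calc (g * M) * (g * M) = (g * g) * (M * M) := by ring
      _ ≤ (g * g) * t ^ (n + F) := Nat.mul_le_mul_left _ hMM
      _ < t ^ (n - F) * t ^ (n + F) := by
          apply Nat.mul_lt_mul_of_lt_of_le
          · rw [← pow_two]; exact hlt
          · exact le_refl _
          · positivity
      _ = t ^ n * t ^ n := by
          rw [← pow_add, ← pow_add]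
          congr 1
          omega
    exact Nat.mul_self_lt_mul_self_iff.mp hsq
  have hbadlt : bad.card < t ^ n := lt_of_le_of_lt hbadcard hfinal
  by_contra hcon
  push_neg at hcon
  have : Finset.univ ⊆ bad := by
    intro f _
    obtain ⟨σ, hσ, hfx⟩ := hcon f
    exact Finset.mem_filter.mpr ⟨Finset.mem_univ _, σ, hσ, hfx⟩
  have := Finset.card_le_card this
  rw [Finset.card_univ, Fintype.card_fun, Fintype.card_fin, ← hn] at this
  omega

noncomputable def restrPerm {V : Type*} {G : SimpleGraph V} (C₁ : Set V) (e : G ≃g G) :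
    Equiv.Perm ↥C₁ :=
  if h : ∀ v, v ∈ C₁ ↔ e v ∈ C₁ then Equiv.Perm.subtypePerm (e : V ≃ V) (fun v => (h v).symm) else 1

/-- If every nontrivial automorphism in the setwise stabilizer 𝒢 of a color class C₁
fixes at most F(C₁) < |C₁| - 2 log_t |𝒢| vertices of C₁, then χ_D(G) ≤ χ(G) + t - 1. -/
theorem stmt_14 {V : Type*} [Fintype V] [DecidableEq V] (G : SimpleGraph V)
    (k : ℕ) (hk : G.chromaticNumber = (k : ℕ∞)) (c : G.Coloring (Fin k)) (i : Fin k)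
    (C₁ : Set V) (hC₁ : C₁ = {v : V | c v = i})
    (𝒢 : Set (G ≃g G)) (h𝒢 : 𝒢 = {e : G ≃g G | (⇑e) '' C₁ = C₁})
    (t : ℕ) (ht : 2 ≤ t) (F : ℕ)
    (hF : ∀ e : G ≃g G, e ∈ 𝒢 → (∃ v : V, e v ≠ v) →
      Nat.card {v : V // v ∈ C₁ ∧ e v = v} ≤ F)
    (hineq : (F : ℝ) < (C₁.ncard : ℝ) - 2 * (Real.log (𝒢.ncard) / Real.log t)) :
    distChromaticNumber G ≤ k + t - 1 := by
  classical
  haveI : Finite (G ≃g G) := Finite.of_injective (fun e : G ≃g G => ⇑e) DFunLike.coe_injective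
  have hmemC : ∀ v, v ∈ C₁ ↔ c v = i := by intro v; rw [hC₁]; exact Iff.rfl
  have hk1 : 1 ≤ k := i.pos
  -- 𝒢 is nonempty (contains the identity)
  have hg1 : 1 ≤ 𝒢.ncard := by
    rw [Nat.one_le_iff_ne_zero, ← Nat.pos_iff_ne_zero]
    apply (Set.ncard_pos (Set.toFinite _)).mpr
    refine ⟨RelIso.refl G.Adj, ?_⟩
    rw [h𝒢]
    show (⇑(RelIso.refl G.Adj)) '' C₁ = C₁
    simp
  obtain ⟨hFn, hg2⟩ := log_ineq_consequence hg1 ht hineq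
  have hα : Fintype.card ↥C₁ = C₁.ncard := by
    rw [← Nat.card_coe_set_eq, Nat.card_eq_fintype_card]
  -- the set of restricted permutations
  have hmemiff_of : ∀ e : G ≃g G, e ∈ 𝒢 → ∀ v, v ∈ C₁ ↔ e v ∈ C₁ := by
    intro e he v
    rw [h𝒢] at he
    have he' : (⇑e) '' C₁ = C₁ := he
    constructor
    · intro hv; rw [← he']; exact Set.mem_image_of_mem _ hv
    · intro hv
      rw [← he'] at hv
      obtain ⟨u, hu, huv⟩ := hv
      rwa [← e.injective huv]
  set Sset : Set (Equiv.Perm ↥C₁) := (restrPerm C₁) '' (𝒢 ∩ {e | ∃ v, e v ≠ v}) with hSset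
  have hScard : Sset.ncard ≤ 𝒢.ncard := by
    apply le_trans (Set.ncard_image_le (Set.toFinite _))
    exact Set.ncard_le_ncard Set.inter_subset_left (Set.toFinite _)
  have hSfix : ∀ σ ∈ Sset, Nat.card {x : ↥C₁ // σ x = x} ≤ F := by
    rintro σ ⟨e, ⟨heG, hemove⟩, rfl⟩
    have hmi := hmemiff_of e heG
    have happly : ∀ x : ↥C₁, ((restrPerm C₁ e) x : V) = e ↑x := by
      intro x
      rw [restrPerm, dif_pos hmi]
      rfl
    have hcard : Nat.card {x : ↥C₁ // (restrPerm C₁ e) x = x} = Nat.card {v : V // v ∈ C₁ ∧ e v = v} := by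
      have he1 : ∀ x : ↥C₁, ((restrPerm C₁ e) x = x) ↔ (e ↑x = ↑x) := by
        intro x
        rw [Subtype.ext_iff, happly]
      rw [Nat.card_congr (Equiv.subtypeEquivRight he1)]
      exact Nat.card_congr (Equiv.subtypeSubtypeEquivSubtypeInter (· ∈ C₁) (fun v => e v = v))
    rw [hcard]
    exact hF e heG hemove
  obtain ⟨f, hf⟩ := exists_good_coloring t F (𝒢.ncard) ht Sset hScard hSfix
    (by rw [hα]; exact hFn) (by rw [hα]; exact hg2)
  -- construct the new coloring
  set d : V → Fin (k + t - 1) := fun v =>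
    if h : v ∈ C₁ then
      ⟨k - 1 + (f ⟨v, h⟩).val, by have := (f ⟨v, h⟩).isLt; omega⟩
    else
      ⟨if (c v).val < i.val then (c v).val else (c v).val - 1, by
        have := (c v).isLt; have := i.isLt; split_ifs <;> omega⟩
    with hd
  have hdin : ∀ v (h : v ∈ C₁), (d v).val = k - 1 + (f ⟨v, h⟩).val := by
    intro v h
    simp only [hd]
    rw [dif_pos h]
  have hdout : ∀ v, v ∉ C₁ →
      (d v).val = if (c v).val < i.val then (c v).val else (c v).val - 1 := by
    intro v h
    simp only [hd]
    rw [dif_neg h]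
  have hhigh : ∀ v (h : v ∈ C₁), k - 1 ≤ (d v).val := by
    intro v h
    rw [hdin v h]
    exact Nat.le_add_right _ _
  have hlow : ∀ v, v ∉ C₁ → (d v).val < k - 1 := by
    intro v h
    rw [hdout v h]
    have hne : (c v).val ≠ i.val := by
      intro hval
      exact h ((hmemC v).mpr (Fin.ext hval))
    have := (c v).isLt
    have := i.isLt
    split_ifs <;> omega
  have hproper : ∀ ⦃u v : V⦄, G.Adj u v → d u ≠ d v := by
    intro u v hadj hduv
    have hcuv : c u ≠ c v := c.valid hadj
    have hval := congrArg Fin.val hduv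
    by_cases hu : u ∈ C₁ <;> by_cases hv : v ∈ C₁
    · exact hcuv (((hmemC u).mp hu).trans ((hmemC v).mp hv).symm)
    · have h1 := hhigh u hu
      have h2 := hlow v hv
      omega
    · have h1 := hlow u hu
      have h2 := hhigh v hv
      omega
    · rw [hdout u hu, hdout v hv] at hval
      have hne : (c u).val ≠ (c v).val := fun h => hcuv (Fin.ext h)
      have hui : (c u).val ≠ i.val := fun h => hu ((hmemC u).mpr (Fin.ext h))
      have hvi : (c v).val ≠ i.val := fun h => hv ((hmemC v).mpr (Fin.ext h))
      have := (c u).isLt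
      have := (c v).isLt
      have := i.isLt
      split_ifs at hval <;> omega
  have hdist : ∀ e : G ≃g G, (∀ v, d (e v) = d v) → ∀ v, e v = v := by
    intro e he
    have hmemiff : ∀ v, v ∈ C₁ ↔ e v ∈ C₁ := by
      intro v
      constructor
      · intro h
        by_contra h'
        have h1 := hhigh v h
        have h2 := hlow (e v) h'
        rw [he v] at h2
        omega
      · intro h
        by_contra h'
        have h1 := hhigh (e v) h
        have h2 := hlow v h'
        rw [he v] at h1
        omega
    have heG : e ∈ 𝒢 := by
      rw [h𝒢]
      show (⇑e) '' C₁ = C₁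
      apply Set.eq_of_subset_of_subset
      · rintro _ ⟨u, hu, rfl⟩
        exact (hmemiff u).mp hu
      · intro v hv
        refine ⟨e.symm v, ?_, e.apply_symm_apply v⟩
        have := hmemiff (e.symm v)
        rw [e.apply_symm_apply] at this
        exact this.mpr hv
    by_contra hcon
    push_neg at hcon
    have hσS : restrPerm C₁ e ∈ Sset := ⟨e, ⟨heG, hcon⟩, rfl⟩
    apply hf (restrPerm C₁ e) hσS
    intro x
    have hx : ((restrPerm C₁ e) x : V) = e ↑x := by
      rw [restrPerm, dif_pos hmemiff]
      rfl
    have hev : (e ↑x : V) ∈ C₁ := (hmemiff ↑x).mp x.2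
    have h1 : (d (e ↑x)).val = k - 1 + (f ⟨e ↑x, hev⟩).val := hdin _ hev
    have h2 : (d (↑x : V)).val = k - 1 + (f ⟨↑x, x.2⟩).val := hdin _ x.2
    have h3 := congrArg Fin.val (he ↑x)
    have h4 : (f ⟨e ↑x, hev⟩).val = (f ⟨↑x, x.2⟩).val := by omega
    have h5 : (restrPerm C₁ e) x = ⟨e ↑x, hev⟩ := Subtype.ext hx
    rw [h5]
    have h6 : f ⟨e ↑x, hev⟩ = f ⟨↑x, x.2⟩ := Fin.ext h4
    rw [h6, Subtype.coe_eta]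
  exact Nat.sInf_le ⟨d, hproper, hdist⟩
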